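/- Let μ, ν be finite nonnegative Borel measures on [0,∞) with the same total mass restricted to [F,∞) in the sense that μ(A) = ν(A) for all Borel A ⊂ [F,∞), for some F ≥ 0. Suppose moreover that for some ε, δ > 0: μ([0,δ]) ≤ ε/2, ν([0,δ]) ≤ ε/2, and the first moments of both measures restricted to [0,F) are at most δε/2 (i.e., ∫_{[0,F)} x μ(dx) ≤ δε/2 and ∫_{[0,F)} x ν(dx) ≤ δε/2). Then the Prohorov distance between μ and ν is at most ε. -/

import Mathlib

open MeasureTheory

private lemma side15 (μ ν : Measure ℝ) [IsFiniteMeasure μ] [IsFiniteMeasure ν]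
    (F δ ε : ℝ) (hδ : 0 < δ) (hε : 0 < ε)
    (hsuppμ : μ (Set.Iio 0) = 0)
    (hagree : ∀ A : Set ℝ, MeasurableSet A → A ⊆ Set.Ici F → μ A = ν A)
    (hμδ : μ (Set.Icc 0 δ) ≤ ENNReal.ofReal (ε / 2))
    (hμmom : (∫⁻ x in Set.Ico 0 F, ENNReal.ofReal x ∂μ)
      ≤ ENNReal.ofReal (δ * ε / 2))
    (ε' : ℝ) (hε' : ε < ε') (B : Set ℝ) (hB : IsClosed B) :
    μ B ≤ ν (Metric.thickening ε' B) + ENNReal.ofReal ε' := by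
  have hBm := hB.measurableSet
  -- Markov bound on the middle piece
  have hmid : μ (Set.Ioo δ F) ≤ ENNReal.ofReal (ε / 2) := by
    have h1 : ENNReal.ofReal δ * μ (Set.Ioo δ F)
        ≤ ∫⁻ x in Set.Ioo δ F, ENNReal.ofReal x ∂μ := by
      rw [← setLIntegral_const]
      exact setLIntegral_mono' measurableSet_Ioo fun x hx =>
        ENNReal.ofReal_le_ofReal hx.1.le
    have h2 : (∫⁻ x in Set.Ioo δ F, ENNReal.ofReal x ∂μ)
        ≤ ∫⁻ x in Set.Ico 0 F, ENNReal.ofReal x ∂μ :=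
      lintegral_mono_set (fun x hx => ⟨(hδ.trans hx.1).le, hx.2⟩)
    have h3 : ENNReal.ofReal δ * μ (Set.Ioo δ F) ≤ ENNReal.ofReal (δ * ε / 2) :=
      (h1.trans h2).trans hμmom
    have hδ0 : (ENNReal.ofReal δ) ≠ 0 := by simp [hδ]
    calc μ (Set.Ioo δ F) ≤ ENNReal.ofReal (δ * ε / 2) / ENNReal.ofReal δ := by
          rw [ENNReal.le_div_iff_mul_le (Or.inl hδ0) (Or.inl ENNReal.ofReal_ne_top)]
          rwa [mul_comm]
      _ = ENNReal.ofReal ((δ * ε / 2) / δ) := by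
          rw [ENNReal.ofReal_div_of_pos hδ]
      _ = ENNReal.ofReal (ε / 2) := by
          congr 1; field_simp
  have hcover : B ⊆ (B ∩ Set.Iio 0) ∪ (B ∩ Set.Icc 0 δ) ∪ (B ∩ Set.Ioo δ F)
      ∪ (B ∩ Set.Ici F) := by
    intro x hx
    rcases lt_or_ge x 0 with h0 | h0
    · exact Or.inl (Or.inl (Or.inl ⟨hx, h0⟩))
    rcases le_or_gt x δ with h1 | h1
    · exact Or.inl (Or.inl (Or.inr ⟨hx, h0, h1⟩))
    rcases lt_or_ge x F with h2 | h2
    · exact Or.inl (Or.inr ⟨hx, h1, h2⟩)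
    · exact Or.inr ⟨hx, h2⟩
  have key : μ B ≤ μ (B ∩ Set.Iio 0) + μ (B ∩ Set.Icc 0 δ) + μ (B ∩ Set.Ioo δ F)
      + μ (B ∩ Set.Ici F) :=
    (measure_mono hcover).trans <|
      le_trans (measure_union_le _ _) (add_le_add_left
        (le_trans (measure_union_le _ _) (add_le_add_left (measure_union_le _ _) _)) _)
  have h0 : μ (B ∩ Set.Iio 0) = 0 :=
    measure_mono_null Set.inter_subset_right hsuppμ
  have hmass : μ (B ∩ Set.Icc 0 δ) ≤ ENNReal.ofReal (ε / 2) :=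
    le_trans (measure_mono Set.inter_subset_right) hμδ
  have hmid' : μ (B ∩ Set.Ioo δ F) ≤ ENNReal.ofReal (ε / 2) :=
    le_trans (measure_mono Set.inter_subset_right) hmid
  have htop : μ (B ∩ Set.Ici F) ≤ ν (Metric.thickening ε' B) := by
    rw [hagree _ (hBm.inter measurableSet_Ici) Set.inter_subset_right]
    exact measure_mono (Set.inter_subset_left.trans
      (Metric.self_subset_thickening (hε.trans hε') B))
  calc μ B ≤ μ (B ∩ Set.Iio 0) + μ (B ∩ Set.Icc 0 δ) + μ (B ∩ Set.Ioo δ F)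
      + μ (B ∩ Set.Ici F) := key
    _ ≤ 0 + ENNReal.ofReal (ε / 2) + ENNReal.ofReal (ε / 2)
        + ν (Metric.thickening ε' B) := by
        gcongr
        · exact h0.le
    _ ≤ ν (Metric.thickening ε' B) + ENNReal.ofReal ε' := by
        rw [zero_add, ← ENNReal.ofReal_add (by positivity) (by positivity)]
        rw [add_comm]
        gcongr
        linarith

theorem stmt15 (μ ν : Measure ℝ) [IsFiniteMeasure μ] [IsFiniteMeasure ν]
    (F δ ε : ℝ) (hF : 0 ≤ F) (hδ : 0 < δ) (hε : 0 < ε)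
    (hsuppμ : μ (Set.Iio 0) = 0) (hsuppν : ν (Set.Iio 0) = 0)
    (hagree : ∀ A : Set ℝ, MeasurableSet A → A ⊆ Set.Ici F → μ A = ν A)
    (hμδ : μ (Set.Icc 0 δ) ≤ ENNReal.ofReal (ε / 2))
    (hνδ : ν (Set.Icc 0 δ) ≤ ENNReal.ofReal (ε / 2))
    (hμmom : (∫⁻ x in Set.Ico 0 F, ENNReal.ofReal x ∂μ)
      ≤ ENNReal.ofReal (δ * ε / 2))
    (hνmom : (∫⁻ x in Set.Ico 0 F, ENNReal.ofReal x ∂ν)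
      ≤ ENNReal.ofReal (δ * ε / 2)) :
    ∀ ε' > ε, ∀ B : Set ℝ, IsClosed B →
      μ B ≤ ν (Metric.thickening ε' B) + ENNReal.ofReal ε' ∧
      ν B ≤ μ (Metric.thickening ε' B) + ENNReal.ofReal ε' := by
  intro ε' hε' B hB
  exact ⟨side15 μ ν F δ ε hδ hε hsuppμ hagree hμδ hμmom ε' hε' B hB,
    side15 ν μ F δ ε hδ hε hsuppν (fun A hA hA' => (hagree A hA hA').symm)
      hνδ hνmom ε' hε' B hB⟩
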